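/- Let k be a field of characteristic 2, let λ, μ ∈ k satisfy λ² + λμ + μ² ≠ 0, and set x = λ(s−1) + μ(t−1) in kQ₈. Then 1 + x is a unit of order 4 in kQ₈ (i.e. (1+x)⁴ = 1 and (1+x)² ≠ 1), and kQ₈ is projective as a left module over the k-subalgebra k⟨x⟩ generated by x. -/

import Mathlib

/-- The quaternion group of order 8. -/
abbrev Q8 : Type := QuaternionGroup 2

/-- The generator `s` of `Q₈`, of order 4. -/
def sQ8 : Q8 := QuaternionGroup.a 1

/-- The generator `t` of `Q₈`, satisfying `t² = s²` and `t·s·t⁻¹ = s⁻¹`. -/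
def tQ8 : Q8 := QuaternionGroup.xa 0

/-- The unique central involution `z = s²` of `Q₈`. -/
def zQ8 : Q8 := sQ8 * sQ8

/-- For `x` in a `k`-algebra `A`, the subalgebra `k⟨x⟩` generated by `x`;
`A` is a left module over it via left multiplication. Note `k⟨x⟩ = k⟨1+x⟩`. -/
noncomputable def kGen (k : Type*) {A : Type*} [Field k] [Ring A] [Algebra k A]
    (x : A) : Subalgebra k A :=
  Algebra.adjoin k {x}

set_option maxHeartbeats 4000000
set_option synthInstance.maxHeartbeats 400000
namespace Q8Aux
open QuaternionGroup MonoidAlgebra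

variable {k : Type} [Field k]

lemma ma_add_apply (f g : MonoidAlgebra k Q8) (pt : Q8) : (f + g).coeff pt = f.coeff pt + g.coeff pt := rfl
lemma ma_sub_apply (f g : MonoidAlgebra k Q8) (pt : Q8) : (f - g).coeff pt = f.coeff pt - g.coeff pt := rfl
lemma ma_neg_apply (f : MonoidAlgebra k Q8) (pt : Q8) : (-f).coeff pt = -(f.coeff pt) := rfl
lemma ma_smul_apply (c : k) (f : MonoidAlgebra k Q8) (pt : Q8) : (c • f).coeff pt = c * f.coeff pt := rfl
lemma ma_zero_apply (pt : Q8) : (0 : MonoidAlgebra k Q8).coeff pt = 0 := rfl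
lemma ma_one_def : (1 : MonoidAlgebra k Q8) = single (a 0) 1 := rfl

/-- canonical form of `x`. -/
noncomputable def Xel (lam mu : k) : MonoidAlgebra k Q8 :=
  single (a 0) (-lam - mu) + single (a 1) lam + single (xa 0) mu

/-- second generator of the free module: `μ·s + λ·st`. -/
noncomputable def G2el (lam mu : k) : MonoidAlgebra k Q8 :=
  single (a 1) mu + single (xa 3) lam

variable (lam mu : k)

lemma hXel : lam • (MonoidAlgebra.of k Q8 sQ8 - 1) + mu • (MonoidAlgebra.of k Q8 tQ8 - 1)
    = Xel lam mu := by
  rw [Xel]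
  refine MonoidAlgebra.ext (Finsupp.ext fun g => ?_)
  fin_cases g <;>
  · simp only [MonoidAlgebra.of_apply, sQ8, tQ8, ma_one_def, ma_add_apply, ma_sub_apply,
      ma_neg_apply, ma_smul_apply, ma_zero_apply, MonoidAlgebra.single_apply]
    try simp +decide only [if_true, if_false]
    try ring

lemma hX2 : Xel lam mu ^ 2 = single (a 0) (mu^2 + (2)*lam*mu + lam^2) + single (a 1) ((-2)*lam*mu + (-2)*lam^2) + single (a 2) (mu^2 + lam^2) + single (xa 0) ((-2)*mu^2 + (-2)*lam*mu) + single (xa 3) (lam*mu) + single (xa 1) (lam*mu) := by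
  rw [pow_two, Xel]
  simp only [add_mul, mul_add, MonoidAlgebra.single_mul_single]
  refine MonoidAlgebra.ext (Finsupp.ext fun g => ?_)
  fin_cases g <;>
  · simp only [Xel, G2el, ma_one_def, ma_add_apply, ma_sub_apply, ma_neg_apply, ma_smul_apply,
      ma_zero_apply, MonoidAlgebra.single_apply]
    try simp +decide only [if_true, if_false]
    try ring

lemma hX3 : Xel lam mu ^ 3 = single (a 0) (-mu^3 + (-3)*lam*mu^2 + (-3)*lam^2*mu + -lam^3) + single (a 1) ((4)*lam*mu^2 + (6)*lam^2*mu + (3)*lam^3) + single (a 2) ((-3)*mu^3 + (-3)*lam*mu^2 + (-3)*lam^2*mu + (-3)*lam^3) + single (a 3) ((2)*lam*mu^2 + lam^3) + single (xa 0) ((3)*mu^3 + (6)*lam*mu^2 + (4)*lam^2*mu) + single (xa 3) ((-3)*lam*mu^2 + (-3)*lam^2*mu) + single (xa 2) (mu^3 + (2)*lam^2*mu) + single (xa 1) ((-3)*lam*mu^2 + (-3)*lam^2*mu) := by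
  rw [pow_succ, hX2]
  conv_lhs => rw [Xel]
  simp only [add_mul, mul_add, MonoidAlgebra.single_mul_single]
  refine MonoidAlgebra.ext (Finsupp.ext fun g => ?_)
  fin_cases g <;>
  · simp only [Xel, G2el, ma_one_def, ma_add_apply, ma_sub_apply, ma_neg_apply, ma_smul_apply,
      ma_zero_apply, MonoidAlgebra.single_apply]
    try simp +decide only [if_true, if_false]
    try ring

lemma hX4 (h2 : (2:k) = 0) : Xel lam mu ^ 4 = 0 := by
  rw [pow_succ, hX3]
  conv_lhs => rw [Xel]
  simp only [add_mul, mul_add, MonoidAlgebra.single_mul_single]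
  refine MonoidAlgebra.ext (Finsupp.ext fun g => ?_)
  fin_cases g
  · simp only [Xel, G2el, ma_one_def, ma_add_apply, ma_sub_apply, ma_neg_apply, ma_smul_apply,
      ma_zero_apply, MonoidAlgebra.single_apply]
    try simp +decide only [if_true, if_false]
    linear_combination (mu^4 + (2)*lam*mu^3 + (5)*lam^2*mu^2 + (2)*lam^3*mu + lam^4) * h2
  · simp only [Xel, G2el, ma_one_def, ma_add_apply, ma_sub_apply, ma_neg_apply, ma_smul_apply,
      ma_zero_apply, MonoidAlgebra.single_apply]
    try simp +decide only [if_true, if_false]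
    linear_combination ((-4)*lam*mu^3 + (-8)*lam^2*mu^2 + (-6)*lam^3*mu + (-2)*lam^4) * h2
  · simp only [Xel, G2el, ma_one_def, ma_add_apply, ma_sub_apply, ma_neg_apply, ma_smul_apply,
      ma_zero_apply, MonoidAlgebra.single_apply]
    try simp +decide only [if_true, if_false]
    linear_combination ((3)*mu^4 + (6)*lam*mu^3 + (7)*lam^2*mu^2 + (6)*lam^3*mu + (3)*lam^4) * h2
  · simp only [Xel, G2el, ma_one_def, ma_add_apply, ma_sub_apply, ma_neg_apply, ma_smul_apply,
      ma_zero_apply, MonoidAlgebra.single_apply]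
    try simp +decide only [if_true, if_false]
    linear_combination ((-4)*lam*mu^3 + (-4)*lam^2*mu^2 + (-2)*lam^3*mu + (-2)*lam^4) * h2
  · simp only [Xel, G2el, ma_one_def, ma_add_apply, ma_sub_apply, ma_neg_apply, ma_smul_apply,
      ma_zero_apply, MonoidAlgebra.single_apply]
    try simp +decide only [if_true, if_false]
    linear_combination ((-2)*mu^4 + (-6)*lam*mu^3 + (-8)*lam^2*mu^2 + (-4)*lam^3*mu) * h2
  · simp only [Xel, G2el, ma_one_def, ma_add_apply, ma_sub_apply, ma_neg_apply, ma_smul_apply,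
      ma_zero_apply, MonoidAlgebra.single_apply]
    try simp +decide only [if_true, if_false]
    linear_combination ((4)*lam*mu^3 + (6)*lam^2*mu^2 + (4)*lam^3*mu) * h2
  · simp only [Xel, G2el, ma_one_def, ma_add_apply, ma_sub_apply, ma_neg_apply, ma_smul_apply,
      ma_zero_apply, MonoidAlgebra.single_apply]
    try simp +decide only [if_true, if_false]
    linear_combination ((-2)*mu^4 + (-2)*lam*mu^3 + (-4)*lam^2*mu^2 + (-4)*lam^3*mu) * h2
  · simp only [Xel, G2el, ma_one_def, ma_add_apply, ma_sub_apply, ma_neg_apply, ma_smul_apply,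
      ma_zero_apply, MonoidAlgebra.single_apply]
    try simp +decide only [if_true, if_false]
    linear_combination ((4)*lam*mu^3 + (6)*lam^2*mu^2 + (4)*lam^3*mu) * h2

lemma hW1 : Xel lam mu * G2el lam mu = single (a 1) (-mu^2) + single (a 2) (lam*mu) + single (xa 3) (-lam*mu + -lam^2) + single (xa 2) (lam^2) + single (xa 1) (mu^2) := by
  rw [Xel, G2el]
  simp only [add_mul, mul_add, MonoidAlgebra.single_mul_single]
  refine MonoidAlgebra.ext (Finsupp.ext fun g => ?_)
  fin_cases g <;>
  · simp only [Xel, G2el, ma_one_def, ma_add_apply, ma_sub_apply, ma_neg_apply, ma_smul_apply,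
      ma_zero_apply, MonoidAlgebra.single_apply]
    try simp +decide only [if_true, if_false]
    try ring

lemma hW2 : Xel lam mu ^ 2 * G2el lam mu = single (a 0) (lam^2*mu) + single (a 1) (mu^3 + -lam^2*mu) + single (a 2) ((-2)*lam*mu^2 + -lam^2*mu) + single (a 3) (mu^3 + lam^2*mu) + single (xa 0) (lam*mu^2) + single (xa 3) (lam*mu^2 + (2)*lam^2*mu + lam^3) + single (xa 2) (lam*mu^2 + (-2)*lam^2*mu + (-2)*lam^3) + single (xa 1) ((-2)*mu^3 + -lam*mu^2 + lam^3) := by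
  rw [hX2, G2el]
  simp only [add_mul, mul_add, MonoidAlgebra.single_mul_single]
  refine MonoidAlgebra.ext (Finsupp.ext fun g => ?_)
  fin_cases g <;>
  · simp only [Xel, G2el, ma_one_def, ma_add_apply, ma_sub_apply, ma_neg_apply, ma_smul_apply,
      ma_zero_apply, MonoidAlgebra.single_apply]
    try simp +decide only [if_true, if_false]
    try ring

lemma hW3 : Xel lam mu ^ 3 * G2el lam mu = single (a 0) ((2)*lam*mu^3 + (-3)*lam^2*mu^2 + (-2)*lam^3*mu) + single (a 1) (-mu^4 + (3)*lam^2*mu^2 + (3)*lam^3*mu) + single (a 2) ((4)*lam*mu^3 + (3)*lam^2*mu^2) + single (a 3) ((-3)*mu^4 + (-2)*lam*mu^3 + (-3)*lam^2*mu^2 + -lam^3*mu) + single (xa 0) ((-3)*lam*mu^3 + -lam^2*mu^2 + lam^4) + single (xa 3) (mu^4 + -lam*mu^3 + -lam^2*mu^2 + (-3)*lam^3*mu + -lam^4) + single (xa 2) ((-3)*lam*mu^3 + lam^2*mu^2 + (6)*lam^3*mu + (3)*lam^4) + single (xa 1) ((3)*mu^4 + (3)*lam*mu^3 + lam^2*mu^2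 + (-3)*lam^3*mu + (-3)*lam^4) := by
  rw [hX3, G2el]
  simp only [add_mul, mul_add, MonoidAlgebra.single_mul_single]
  refine MonoidAlgebra.ext (Finsupp.ext fun g => ?_)
  fin_cases g <;>
  · simp only [Xel, G2el, ma_one_def, ma_add_apply, ma_sub_apply, ma_neg_apply, ma_smul_apply,
      ma_zero_apply, MonoidAlgebra.single_apply]
    try simp +decide only [if_true, if_false]
    try ring

lemma key0 : ((-mu^16 + (-2)*lam^2*mu^14 + (-4)*lam^4*mu^12 + (-4)*lam^6*mu^10 + (-5)*lam^8*mu^8 + (-4)*lam^10*mu^6 + (-4)*lam^12*mu^4 + (-2)*lam^14*mu^2 + -lam^16) : k) • (single (a 0) (1:k) : MonoidAlgebra k Q8) = (-mu^16 + (-2)*lam^2*mu^14 + (-4)*lam^4*mu^12 + (-4)*lam^6*mu^10 + (-5)*lam^8*mu^8 + (-4)*lam^10*mu^6 + (-4)*lam^12*mu^4 + (-2)*lam^14*mu^2 + -lam^16) • ((1 : MonoidAlgebra k Q8)) + (0 : k) • (Xel lam mu) + (0 : k) • (Xel lam mu ^ 2) + (0 : k) • (Xel lam mu ^ 3) + (0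 : k) • (G2el lam mu) + (0 : k) • (Xel lam mu * G2el lam mu) + (0 : k) • (Xel lam mu ^ 2 * G2el lam mu) + (0 : k) • (Xel lam mu ^ 3 * G2el lam mu) := by
  rw [hW3, hW2, hW1, hX3, hX2]
  refine MonoidAlgebra.ext (Finsupp.ext fun g => ?_)
  fin_cases g <;>
  · simp only [Xel, G2el, ma_one_def, ma_add_apply, ma_sub_apply, ma_neg_apply, ma_smul_apply,
      ma_zero_apply, MonoidAlgebra.single_apply]
    try simp +decide only [if_true, if_false]
    try ring

lemma key1 : ((-mu^16 + (-2)*lam^2*mu^14 + (-4)*lam^4*mu^12 + (-4)*lam^6*mu^10 + (-5)*lam^8*mu^8 + (-4)*lam^10*mu^6 + (-4)*lam^12*mu^4 + (-2)*lam^14*mu^2 + -lam^16) : k) • (single (a 1) (1:k) : MonoidAlgebra k Q8) = ((-3)*lam^2*mu^14 + (-3)*lam^3*mu^13 + (-4)*lam^4*mu^12 + -lam^5*mu^11 + (-9)*lam^6*mu^10 + (-12)*lam^7*mu^9 + (-21)*lam^8*mu^8 + (-17)*lam^9*mu^7 + (-25)*lam^10*mu^6 + (-20)*lam^11*mu^5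 + (-21)*lam^12*mu^4 + (-9)*lam^13*mu^3 + (-6)*lam^14*mu^2 + -lam^15*mu + -lam^16) • ((1 : MonoidAlgebra k Q8)) + ((-2)*lam^2*mu^13 + (-3)*lam^3*mu^12 + -lam^5*mu^10 + (-6)*lam^6*mu^9 + (-16)*lam^7*mu^8 + (-16)*lam^8*mu^7 + (-21)*lam^9*mu^6 + (-18)*lam^10*mu^5 + (-24)*lam^11*mu^4 + (-12)*lam^12*mu^3 + (-9)*lam^13*mu^2 + -lam^15) • (Xel lam mu) + (-lam^2*mu^12 + (-3)*lam^6*mu^8 + (-6)*lam^7*mu^7 + (-8)*lam^8*mu^6 + (-6)*lam^9*mu^5 + (-9)*lam^10*mu^4 + (-6)*lam^11*mu^3 + (-6)*lam^12*mu^2) • (Xel lam mu ^ 2) + ((-2)*lam^7*mu^6 + (-2)*lam^9*mu^4 + (-2)*lam^11*mu^2) • (Xel lam mu ^ 3) + (-mu^15 + lam*mu^14 + (3)*lam^3*mu^12 + (-3)*lam^4*mu^11 + (4)*lam^5*mu^10 + lam^6*mu^9 + (11)*lam^7*mu^8 + (5)*lam^8*mu^7 + (12)*lam^9*mu^6 +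 (9)*lam^10*mu^5 + (11)*lam^11*mu^4 + (6)*lam^12*mu^3 + (3)*lam^13*mu^2 + lam^14*mu) • (G2el lam mu) + ((3)*lam*mu^13 + (4)*lam^2*mu^12 + (5)*lam^3*mu^11 + (2)*lam^4*mu^10 + (10)*lam^5*mu^9 + (12)*lam^6*mu^8 + (17)*lam^7*mu^7 + (14)*lam^8*mu^6 + (18)*lam^9*mu^5 + (16)*lam^10*mu^4 + (13)*lam^11*mu^3 + (6)*lam^12*mu^2 + (3)*lam^13*mu) • (Xel lam mu * G2el lam mu) + ((3)*lam*mu^12 + (2)*lam^2*mu^11 + (3)*lam^3*mu^10 + lam^4*mu^9 + (9)*lam^5*mu^8 + (6)*lam^6*mu^7 + (9)*lam^7*mu^6 + (7)*lam^8*mu^5 + (9)*lam^9*mu^4 + (8)*lam^10*mu^3 + (3)*lam^11*mu^2 + (3)*lam^12*mu) • (Xel lam mu ^ 2 * G2el lam mu) + (lam*mu^11 + lam^3*mu^9 + (3)*lam^5*mu^7 + (3)*lam^7*mu^5 + (3)*lam^9*mu^3 + lam^11*mu) • (Xel lam mu ^ 3 * G2el lam mu) := by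
  rw [hW3, hW2, hW1, hX3, hX2]
  refine MonoidAlgebra.ext (Finsupp.ext fun g => ?_)
  fin_cases g <;>
  · simp only [Xel, G2el, ma_one_def, ma_add_apply, ma_sub_apply, ma_neg_apply, ma_smul_apply,
      ma_zero_apply, MonoidAlgebra.single_apply]
    try simp +decide only [if_true, if_false]
    try ring

lemma key2 : ((-mu^16 + (-2)*lam^2*mu^14 + (-4)*lam^4*mu^12 + (-4)*lam^6*mu^10 + (-5)*lam^8*mu^8 + (-4)*lam^10*mu^6 + (-4)*lam^12*mu^4 + (-2)*lam^14*mu^2 + -lam^16) : k) • (single (a 2) (1:k) : MonoidAlgebra k Q8) = (-mu^16 + (-2)*lam*mu^15 + (-6)*lam^2*mu^14 + (-8)*lam^3*mu^13 + (-16)*lam^4*mu^12 + (-18)*lam^5*mu^11 + (-28)*lam^6*mu^10 + (-26)*lam^7*mu^9 + (-33)*lam^8*mu^8 + (-26)*lam^9*mu^7 + (-28)*lam^10*mu^6 + (-18)*lam^11*mu^5 + (-16)*lam^12*mu^4 + (-8)*lam^13*mu^3 + (-6)*lam^14*mu^2 + (-2)*lam^15*mu + -lam^16) • ((1 : MonoidAlgebra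 k Q8)) + ((-2)*mu^15 + (-2)*lam*mu^14 + (-6)*lam^2*mu^13 + (-10)*lam^3*mu^12 + (-16)*lam^4*mu^11 + (-22)*lam^5*mu^10 + (-24)*lam^6*mu^9 + (-32)*lam^7*mu^8 + (-28)*lam^8*mu^7 + (-30)*lam^9*mu^6 + (-20)*lam^10*mu^5 + (-20)*lam^11*mu^4 + (-10)*lam^12*mu^3 + (-8)*lam^13*mu^2 + (-2)*lam^14*mu + (-2)*lam^15) • (Xel lam mu) + (-mu^14 + (-3)*lam^2*mu^12 + (-3)*lam^3*mu^11 + (-8)*lam^4*mu^10 + (-6)*lam^5*mu^9 + (-12)*lam^6*mu^8 + (-9)*lam^7*mu^7 + (-14)*lam^8*mu^6 + (-6)*lam^9*mu^5 + (-10)*lam^10*mu^4 + (-3)*lam^11*mu^3 + (-5)*lam^12*mu^2 + -lam^14) • (Xel lam mu ^ 2) + (-lam^3*mu^10 + (-2)*lam^5*mu^8 + (-3)*lam^7*mu^6 + (-2)*lam^9*mu^4 + -lam^11*mu^2) • (Xel lam mu ^ 3) + ((2)*lam*mu^14 + (2)*lam^2*mu^13 + (6)*lam^3*mu^12 + (6)*lam^4*mu^11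 + (12)*lam^5*mu^10 + (12)*lam^6*mu^9 + (14)*lam^7*mu^8 + (14)*lam^8*mu^7 + (12)*lam^9*mu^6 + (12)*lam^10*mu^5 + (6)*lam^11*mu^4 + (6)*lam^12*mu^3 + (2)*lam^13*mu^2 + (2)*lam^14*mu) • (G2el lam mu) + ((4)*lam*mu^13 + (4)*lam^2*mu^12 + (10)*lam^3*mu^11 + (10)*lam^4*mu^10 + (18)*lam^5*mu^9 + (16)*lam^6*mu^8 + (18)*lam^7*mu^7 + (14)*lam^8*mu^6 + (14)*lam^9*mu^5 + (8)*lam^10*mu^4 + (6)*lam^11*mu^3 + (2)*lam^12*mu^2 + (2)*lam^13*mu) • (Xel lam mu * G2el lam mu) + ((3)*lam*mu^12 + (2)*lam^2*mu^11 + (6)*lam^3*mu^10 + (5)*lam^4*mu^9 + (9)*lam^5*mu^8 + (8)*lam^6*mu^7 + (6)*lam^7*mu^6 + (7)*lam^8*mu^5 + (3)*lam^9*mu^4 + (4)*lam^10*mu^3 + lam^12*mu) • (Xel lam mu ^ 2 * G2el lam mu) + (lam*mu^11 + (2)*lam^3*mu^9 + (3)*lam^5*mu^7 + (2)*lam^7*mu^5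 + lam^9*mu^3) • (Xel lam mu ^ 3 * G2el lam mu) := by
  rw [hW3, hW2, hW1, hX3, hX2]
  refine MonoidAlgebra.ext (Finsupp.ext fun g => ?_)
  fin_cases g <;>
  · simp only [Xel, G2el, ma_one_def, ma_add_apply, ma_sub_apply, ma_neg_apply, ma_smul_apply,
      ma_zero_apply, MonoidAlgebra.single_apply]
    try simp +decide only [if_true, if_false]
    try ring

lemma key3 : ((-mu^16 + (-2)*lam^2*mu^14 + (-4)*lam^4*mu^12 + (-4)*lam^6*mu^10 + (-5)*lam^8*mu^8 + (-4)*lam^10*mu^6 + (-4)*lam^12*mu^4 + (-2)*lam^14*mu^2 + -lam^16) : k) • (single (a 3) (1:k) : MonoidAlgebra k Q8) = ((2)*lam*mu^15 + (5)*lam^2*mu^14 + (5)*lam^3*mu^13 + (-4)*lam^4*mu^12 + (-11)*lam^5*mu^11 + (-21)*lam^6*mu^10 + (-22)*lam^7*mu^9 + (-37)*lam^8*mu^8 + (-35)*lam^9*mu^7 + (-37)*lam^10*mu^6 + (-22)*lam^11*mu^5 + (-21)*lam^12*mu^4 + (-13)*lam^13*mu^3 + (-10)*lam^14*mu^2 +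 (-3)*lam^15*mu + -lam^16) • ((1 : MonoidAlgebra k Q8)) + ((4)*lam*mu^14 + (6)*lam^2*mu^13 + (5)*lam^3*mu^12 + (-8)*lam^4*mu^11 + (-15)*lam^5*mu^10 + (-20)*lam^6*mu^9 + (-30)*lam^7*mu^8 + (-36)*lam^8*mu^7 + (-43)*lam^9*mu^6 + (-28)*lam^10*mu^5 + (-26)*lam^11*mu^4 + (-16)*lam^12*mu^3 + (-15)*lam^13*mu^2 + (-6)*lam^14*mu + (-3)*lam^15) • (Xel lam mu) + ((3)*lam*mu^13 + (3)*lam^2*mu^12 + (-4)*lam^4*mu^10 + (-6)*lam^5*mu^9 + (-10)*lam^6*mu^8 + (-12)*lam^7*mu^7 + (-18)*lam^8*mu^6 + (-12)*lam^9*mu^5 + (-14)*lam^10*mu^4 + (-6)*lam^11*mu^3 + (-8)*lam^12*mu^2 + (-3)*lam^13*mu + (-3)*lam^14) • (Xel lam mu ^ 2) + (lam*mu^12 + (-2)*lam^5*mu^8 + (-4)*lam^7*mu^6 + (-4)*lam^9*mu^4 + (-2)*lam^11*mu^2 + -lam^13) • (Xel lam mu ^ 3) + (-mu^15 + -lam*mu^14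 + (-6)*lam^2*mu^13 + lam^3*mu^12 + -lam^4*mu^11 + (12)*lam^5*mu^10 + (5)*lam^6*mu^9 + (17)*lam^7*mu^8 + (15)*lam^8*mu^7 + (20)*lam^9*mu^6 + (13)*lam^10*mu^5 + (9)*lam^11*mu^4 + (8)*lam^12*mu^3 + (5)*lam^13*mu^2 + (3)*lam^14*mu) • (G2el lam mu) + ((-2)*mu^14 + -lam*mu^13 + (-6)*lam^2*mu^12 + (7)*lam^3*mu^11 + (8)*lam^4*mu^10 + (20)*lam^5*mu^9 + (14)*lam^6*mu^8 + (27)*lam^7*mu^7 + (24)*lam^8*mu^6 + (24)*lam^9*mu^5 + (10)*lam^10*mu^4 + (11)*lam^11*mu^3 + (6)*lam^12*mu^2 + (5)*lam^13*mu) • (Xel lam mu * G2el lam mu) + (-mu^13 + (-3)*lam^2*mu^11 + (9)*lam^3*mu^10 + (4)*lam^4*mu^9 + (12)*lam^5*mu^8 + (7)*lam^6*mu^7 + (15)*lam^7*mu^6 + (12)*lam^8*mu^5 + (6)*lam^9*mu^4 + (5)*lam^10*mu^3 + (3)*lam^11*mu^2 + (3)*lam^12*mu) • (Xel lam mu ^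 2 * G2el lam mu) + ((3)*lam^3*mu^9 + (4)*lam^5*mu^7 + (5)*lam^7*mu^5 + (2)*lam^9*mu^3 + lam^11*mu) • (Xel lam mu ^ 3 * G2el lam mu) := by
  rw [hW3, hW2, hW1, hX3, hX2]
  refine MonoidAlgebra.ext (Finsupp.ext fun g => ?_)
  fin_cases g <;>
  · simp only [Xel, G2el, ma_one_def, ma_add_apply, ma_sub_apply, ma_neg_apply, ma_smul_apply,
      ma_zero_apply, MonoidAlgebra.single_apply]
    try simp +decide only [if_true, if_false]
    try ring

lemma key4 : ((-mu^16 + (-2)*lam^2*mu^14 + (-4)*lam^4*mu^12 + (-4)*lam^6*mu^10 + (-5)*lam^8*mu^8 + (-4)*lam^10*mu^6 + (-4)*lam^12*mu^4 + (-2)*lam^14*mu^2 + -lam^16) : k) • (single (xa 0) (1:k) : MonoidAlgebra k Q8) = (-mu^16 + -lam*mu^15 + (-2)*lam^2*mu^14 + lam^3*mu^13 + -lam^4*mu^12 + (-3)*lam^6*mu^10 + (5)*lam^7*mu^9 + (7)*lam^8*mu^8 + (16)*lam^9*mu^7 + (13)*lam^10*mu^6 + (21)*lam^11*mu^5 + (16)*lam^12*mu^4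 + (17)*lam^13*mu^3 + (7)*lam^14*mu^2 + (4)*lam^15*mu) • ((1 : MonoidAlgebra k Q8)) + (-mu^15 + (-2)*lam^2*mu^13 + (2)*lam^3*mu^12 + -lam^4*mu^11 + (-3)*lam^6*mu^9 + (6)*lam^7*mu^8 + (11)*lam^8*mu^7 + (16)*lam^9*mu^6 + (17)*lam^10*mu^5 + (18)*lam^11*mu^4 + (20)*lam^12*mu^3 + (12)*lam^13*mu^2 + (7)*lam^14*mu) • (Xel lam mu) + (lam^3*mu^11 + (3)*lam^7*mu^7 + (6)*lam^8*mu^6 + (8)*lam^9*mu^5 + (6)*lam^10*mu^4 + (9)*lam^11*mu^3 + (6)*lam^12*mu^2 + (6)*lam^13*mu) • (Xel lam mu ^ 2) + ((2)*lam^8*mu^5 + (2)*lam^10*mu^3 + (2)*lam^12*mu) • (Xel lam mu ^ 3) + (lam*mu^14 + -lam^2*mu^13 + (-3)*lam^4*mu^11 + (3)*lam^5*mu^10 + (-4)*lam^6*mu^9 + -lam^7*mu^8 + (-11)*lam^8*mu^7 + (-5)*lam^9*mu^6 + (-12)*lam^10*mu^5 + (-9)*lam^11*mu^4 + (-11)*lam^12*mu^3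 + (-6)*lam^13*mu^2 + (-3)*lam^14*mu + -lam^15) • (G2el lam mu) + ((-3)*lam^2*mu^12 + (-4)*lam^3*mu^11 + (-5)*lam^4*mu^10 + (-2)*lam^5*mu^9 + (-10)*lam^6*mu^8 + (-12)*lam^7*mu^7 + (-17)*lam^8*mu^6 + (-14)*lam^9*mu^5 + (-18)*lam^10*mu^4 + (-16)*lam^11*mu^3 + (-13)*lam^12*mu^2 + (-6)*lam^13*mu + (-3)*lam^14) • (Xel lam mu * G2el lam mu) + ((-3)*lam^2*mu^11 + (-2)*lam^3*mu^10 + (-3)*lam^4*mu^9 + -lam^5*mu^8 + (-9)*lam^6*mu^7 + (-6)*lam^7*mu^6 + (-9)*lam^8*mu^5 + (-7)*lam^9*mu^4 + (-9)*lam^10*mu^3 + (-8)*lam^11*mu^2 + (-3)*lam^12*mu + (-3)*lam^13) • (Xel lam mu ^ 2 * G2el lam mu) + (-lam^2*mu^10 + -lam^4*mu^8 + (-3)*lam^6*mu^6 + (-3)*lam^8*mu^4 + (-3)*lam^10*mu^2 + -lam^12) • (Xel lam mu ^ 3 * G2el lam mu) := by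
  rw [hW3, hW2, hW1, hX3, hX2]
  refine MonoidAlgebra.ext (Finsupp.ext fun g => ?_)
  fin_cases g <;>
  · simp only [Xel, G2el, ma_one_def, ma_add_apply, ma_sub_apply, ma_neg_apply, ma_smul_apply,
      ma_zero_apply, MonoidAlgebra.single_apply]
    try simp +decide only [if_true, if_false]
    try ring

lemma key5 : ((-mu^16 + (-2)*lam^2*mu^14 + (-4)*lam^4*mu^12 + (-4)*lam^6*mu^10 + (-5)*lam^8*mu^8 + (-4)*lam^10*mu^6 + (-4)*lam^12*mu^4 + (-2)*lam^14*mu^2 + -lam^16) : k) • (single (xa 3) (1:k) : MonoidAlgebra k Q8) = ((3)*lam*mu^15 + (3)*lam^2*mu^14 + (4)*lam^3*mu^13 + lam^4*mu^12 + (9)*lam^5*mu^11 + (12)*lam^6*mu^10 + (21)*lam^7*mu^9 + (17)*lam^8*mu^8 + (25)*lam^9*mu^7 + (20)*lam^10*mu^6 + (21)*lam^11*mu^5 + (9)*lam^12*mu^4 + (6)*lam^13*mu^3 + lam^14*mu^2 + lam^15*mu) • ((1 : MonoidAlgebra k Q8)) + ((2)*lam*mu^14 + (3)*lam^2*mu^13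 + lam^4*mu^11 + (6)*lam^5*mu^10 + (16)*lam^6*mu^9 + (16)*lam^7*mu^8 + (21)*lam^8*mu^7 + (18)*lam^9*mu^6 + (24)*lam^10*mu^5 + (12)*lam^11*mu^4 + (9)*lam^12*mu^3 + lam^14*mu) • (Xel lam mu) + (lam*mu^13 + (3)*lam^5*mu^9 + (6)*lam^6*mu^8 + (8)*lam^7*mu^7 + (6)*lam^8*mu^6 + (9)*lam^9*mu^5 + (6)*lam^10*mu^4 + (6)*lam^11*mu^3) • (Xel lam mu ^ 2) + ((2)*lam^6*mu^7 + (2)*lam^8*mu^5 + (2)*lam^10*mu^3) • (Xel lam mu ^ 3) + (-mu^15 + (-2)*lam*mu^14 + (-3)*lam^2*mu^13 + -lam^3*mu^12 + (-4)*lam^4*mu^11 + (-5)*lam^5*mu^10 + (-11)*lam^6*mu^9 + (-10)*lam^7*mu^8 + (-12)*lam^8*mu^7 + (-13)*lam^9*mu^6 + (-11)*lam^10*mu^5 + (-10)*lam^11*mu^4 + (-3)*lam^12*mu^3 + (-3)*lam^13*mu^2 + -lam^15) • (G2el lam mu) + ((-3)*mu^14 + (-4)*lam*mu^13 + (-5)*lam^2*mu^12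 + (-2)*lam^3*mu^11 + (-10)*lam^4*mu^10 + (-12)*lam^5*mu^9 + (-17)*lam^6*mu^8 + (-14)*lam^7*mu^7 + (-18)*lam^8*mu^6 + (-16)*lam^9*mu^5 + (-13)*lam^10*mu^4 + (-6)*lam^11*mu^3 + (-3)*lam^12*mu^2) • (Xel lam mu * G2el lam mu) + ((-3)*mu^13 + (-2)*lam*mu^12 + (-3)*lam^2*mu^11 + -lam^3*mu^10 + (-9)*lam^4*mu^9 + (-6)*lam^5*mu^8 + (-9)*lam^6*mu^7 + (-7)*lam^7*mu^6 + (-9)*lam^8*mu^5 + (-8)*lam^9*mu^4 + (-3)*lam^10*mu^3 + (-3)*lam^11*mu^2) • (Xel lam mu ^ 2 * G2el lam mu) + (-mu^12 + -lam^2*mu^10 + (-3)*lam^4*mu^8 + (-3)*lam^6*mu^6 + (-3)*lam^8*mu^4 + -lam^10*mu^2) • (Xel lam mu ^ 3 * G2el lam mu) := by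
  rw [hW3, hW2, hW1, hX3, hX2]
  refine MonoidAlgebra.ext (Finsupp.ext fun g => ?_)
  fin_cases g <;>
  · simp only [Xel, G2el, ma_one_def, ma_add_apply, ma_sub_apply, ma_neg_apply, ma_smul_apply,
      ma_zero_apply, MonoidAlgebra.single_apply]
    try simp +decide only [if_true, if_false]
    try ring

lemma key6 : ((-mu^16 + (-2)*lam^2*mu^14 + (-4)*lam^4*mu^12 + (-4)*lam^6*mu^10 + (-5)*lam^8*mu^8 + (-4)*lam^10*mu^6 + (-4)*lam^12*mu^4 + (-2)*lam^14*mu^2 + -lam^16) : k) • (single (xa 2) (1:k) : MonoidAlgebra k Q8) = (-mu^16 + (-3)*lam*mu^15 + (-6)*lam^2*mu^14 + (-7)*lam^3*mu^13 + (-5)*lam^4*mu^12 + (6)*lam^5*mu^11 + (13)*lam^6*mu^10 + (27)*lam^7*mu^9 + (27)*lam^8*mu^8 + (38)*lam^9*mu^7 + (29)*lam^10*mu^6 + (27)*lam^11*mu^5 + (12)*lam^12*mu^4 + (9)*lam^13*mu^3 + (3)*lam^14*mu^2 + (2)*lam^15*mu) • ((1 : MonoidAlgebra k Q8)) + ((-3)*mu^15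 + (-6)*lam*mu^14 + (-10)*lam^2*mu^13 + (-10)*lam^3*mu^12 + (-7)*lam^4*mu^11 + (4)*lam^5*mu^10 + (17)*lam^6*mu^9 + (22)*lam^7*mu^8 + (33)*lam^8*mu^7 + (28)*lam^9*mu^6 + (33)*lam^10*mu^5 + (14)*lam^11*mu^4 + (12)*lam^12*mu^3 + (2)*lam^13*mu^2 + (3)*lam^14*mu) • (Xel lam mu) + ((-3)*mu^14 + (-3)*lam*mu^13 + (-6)*lam^2*mu^12 + (-5)*lam^3*mu^11 + (-3)*lam^4*mu^10 + (2)*lam^5*mu^9 + (6)*lam^6*mu^8 + (11)*lam^7*mu^7 + (9)*lam^8*mu^6 + (14)*lam^9*mu^5 + (6)*lam^10*mu^4 + (7)*lam^11*mu^3 + lam^13*mu) • (Xel lam mu ^ 2) + (-mu^13 + (-2)*lam^2*mu^11 + -lam^4*mu^9 + (2)*lam^6*mu^7 + (3)*lam^8*mu^5 + (2)*lam^10*mu^3) • (Xel lam mu ^ 3) + ((3)*lam*mu^14 + lam^2*mu^13 + (6)*lam^3*mu^12 + (-5)*lam^4*mu^11 + -lam^5*mu^10 + (-16)*lam^6*mu^9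 + (-11)*lam^7*mu^8 + (-21)*lam^8*mu^7 + (-17)*lam^9*mu^6 + (-16)*lam^10*mu^5 + (-11)*lam^11*mu^4 + (-5)*lam^12*mu^3 + (-4)*lam^13*mu^2 + -lam^14*mu + -lam^15) • (G2el lam mu) + ((4)*lam*mu^13 + -lam^2*mu^12 + (2)*lam^3*mu^11 + (-13)*lam^4*mu^10 + (-12)*lam^5*mu^9 + (-26)*lam^6*mu^8 + (-22)*lam^7*mu^7 + (-29)*lam^8*mu^6 + (-20)*lam^9*mu^5 + (-18)*lam^10*mu^4 + (-6)*lam^11*mu^3 + (-5)*lam^12*mu^2 + -lam^14) • (Xel lam mu * G2el lam mu) + ((2)*lam*mu^12 + (-3)*lam^2*mu^11 + lam^3*mu^10 + (-12)*lam^4*mu^9 + (-6)*lam^5*mu^8 + (-15)*lam^6*mu^7 + (-11)*lam^7*mu^6 + (-12)*lam^8*mu^5 + (-10)*lam^9*mu^4 + (-3)*lam^10*mu^3 + (-3)*lam^11*mu^2) • (Xel lam mu ^ 2 * G2el lam mu) + (-lam^2*mu^10 + (-4)*lam^4*mu^8 + (-5)*lam^6*mu^6 + (-4)*lam^8*mu^4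 + -lam^10*mu^2) • (Xel lam mu ^ 3 * G2el lam mu) := by
  rw [hW3, hW2, hW1, hX3, hX2]
  refine MonoidAlgebra.ext (Finsupp.ext fun g => ?_)
  fin_cases g <;>
  · simp only [Xel, G2el, ma_one_def, ma_add_apply, ma_sub_apply, ma_neg_apply, ma_smul_apply,
      ma_zero_apply, MonoidAlgebra.single_apply]
    try simp +decide only [if_true, if_false]
    try ring

lemma key7 : ((-mu^16 + (-2)*lam^2*mu^14 + (-4)*lam^4*mu^12 + (-4)*lam^6*mu^10 + (-5)*lam^8*mu^8 + (-4)*lam^10*mu^6 + (-4)*lam^12*mu^4 + (-2)*lam^14*mu^2 + -lam^16) : k) • (single (xa 1) (1:k) : MonoidAlgebra k Q8) = (lam*mu^15 + (3)*lam^2*mu^14 + (12)*lam^3*mu^13 + (17)*lam^4*mu^12 + (27)*lam^5*mu^11 + (24)*lam^6*mu^10 + (31)*lam^7*mu^9 + (25)*lam^8*mu^8 + (27)*lam^9*mu^7 + (16)*lam^10*mu^6 + (15)*lam^11*mu^5 + (9)*lam^12*mu^4 + (10)*lam^13*mu^3 + (5)*lam^14*mu^2 + (3)*lam^15*mu) •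 ((1 : MonoidAlgebra k Q8)) + ((2)*lam*mu^14 + (5)*lam^2*mu^13 + (14)*lam^3*mu^12 + (23)*lam^4*mu^11 + (26)*lam^5*mu^10 + (30)*lam^6*mu^9 + (26)*lam^7*mu^8 + (31)*lam^8*mu^7 + (22)*lam^9*mu^6 + (18)*lam^10*mu^5 + (10)*lam^11*mu^4 + (11)*lam^12*mu^3 + (8)*lam^13*mu^2 + (5)*lam^14*mu) • (Xel lam mu) + (lam*mu^13 + (3)*lam^2*mu^12 + (7)*lam^3*mu^11 + (9)*lam^4*mu^10 + (13)*lam^5*mu^9 + (9)*lam^6*mu^8 + (13)*lam^7*mu^7 + (9)*lam^8*mu^6 + (11)*lam^9*mu^5 + (3)*lam^10*mu^4 + (5)*lam^11*mu^3 + (3)*lam^12*mu^2 + (4)*lam^13*mu) • (Xel lam mu ^ 2) + (lam^2*mu^11 + (3)*lam^4*mu^9 + (3)*lam^6*mu^7 + (3)*lam^8*mu^5 + lam^10*mu^3 + lam^12*mu) • (Xel lam mu ^ 3) + (-mu^15 + (-5)*lam^2*mu^13 + (-7)*lam^3*mu^12 + (-14)*lam^4*mu^11 + (-13)*lam^5*mu^10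 + (-15)*lam^6*mu^9 + (-16)*lam^7*mu^8 + (-14)*lam^8*mu^7 + (-13)*lam^9*mu^6 + (-7)*lam^10*mu^5 + (-8)*lam^11*mu^4 + (-5)*lam^12*mu^3 + (-5)*lam^13*mu^2 + (-2)*lam^14*mu + -lam^15) • (G2el lam mu) + (-mu^14 + (-9)*lam^2*mu^12 + (-12)*lam^3*mu^11 + (-18)*lam^4*mu^10 + (-14)*lam^5*mu^9 + (-19)*lam^6*mu^8 + (-16)*lam^7*mu^7 + (-14)*lam^8*mu^6 + (-6)*lam^9*mu^5 + (-7)*lam^10*mu^4 + (-4)*lam^11*mu^3 + (-5)*lam^12*mu^2 + (-2)*lam^13*mu + (-2)*lam^14) • (Xel lam mu * G2el lam mu) + ((-6)*lam^2*mu^11 + (-6)*lam^3*mu^10 + (-6)*lam^4*mu^9 + (-7)*lam^5*mu^8 + (-6)*lam^6*mu^7 + (-8)*lam^7*mu^6 + (-3)*lam^9*mu^4 + (-2)*lam^11*mu^2 + -lam^13) • (Xel lam mu ^ 2 * G2el lam mu) + ((-2)*lam^2*mu^10 + (-2)*lam^4*mu^8 + (-2)*lam^6*mu^6) • (Xel lam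 mu ^ 3 * G2el lam mu) := by
  rw [hW3, hW2, hW1, hX3, hX2]
  refine MonoidAlgebra.ext (Finsupp.ext fun g => ?_)
  fin_cases g <;>
  · simp only [Xel, G2el, ma_one_def, ma_add_apply, ma_sub_apply, ma_neg_apply, ma_smul_apply,
      ma_zero_apply, MonoidAlgebra.single_apply]
    try simp +decide only [if_true, if_false]
    try ring

lemma hDet (h2 : (2:k) = 0) (hd : lam ^ 2 + lam * mu + mu ^ 2 ≠ 0) : ((-mu^16 + (-2)*lam^2*mu^14 + (-4)*lam^4*mu^12 + (-4)*lam^6*mu^10 + (-5)*lam^8*mu^8 + (-4)*lam^10*mu^6 + (-4)*lam^12*mu^4 + (-2)*lam^14*mu^2 + -lam^16) : k) ≠ 0 := by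
  have hD : ((-mu^16 + (-2)*lam^2*mu^14 + (-4)*lam^4*mu^12 + (-4)*lam^6*mu^10 + (-5)*lam^8*mu^8 + (-4)*lam^10*mu^6 + (-4)*lam^12*mu^4 + (-2)*lam^14*mu^2 + -lam^16) : k) = (lam ^ 2 + lam * mu + mu ^ 2) ^ 8 := by
    linear_combination (-mu^16 + (-4)*lam*mu^15 + (-19)*lam^2*mu^14 + (-56)*lam^3*mu^13 + (-135)*lam^4*mu^12 + (-252)*lam^5*mu^11 + (-394)*lam^6*mu^10 + (-508)*lam^7*mu^9 + (-556)*lam^8*mu^8 + (-508)*lam^9*mu^7 + (-394)*lam^10*mu^6 + (-252)*lam^11*mu^5 + (-135)*lam^12*mu^4 + (-56)*lam^13*mu^3 + (-19)*lam^14*mu^2 + (-4)*lam^15*mu + -lam^16) * h2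
  rw [hD]; exact pow_ne_zero _ hd

noncomputable def famV (lam mu : k) : Fin 8 → MonoidAlgebra k Q8 :=
  ![1, Xel lam mu, Xel lam mu ^ 2, Xel lam mu ^ 3, G2el lam mu,
    Xel lam mu * G2el lam mu, Xel lam mu ^ 2 * G2el lam mu, Xel lam mu ^ 3 * G2el lam mu]

lemma single_mem_span (h2 : (2:k) = 0) (hd : lam ^ 2 + lam * mu + mu ^ 2 ≠ 0) (g : Q8) :
    (single g (1:k) : MonoidAlgebra k Q8) ∈ Submodule.span k (Set.range (famV lam mu)) := by
  have hD := hDet lam mu h2 hd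
  fin_cases g
  · show (single (a 0) (1:k) : MonoidAlgebra k Q8) ∈ Submodule.span k (Set.range (famV lam mu))
    rw [show (single (a 0) (1:k) : MonoidAlgebra k Q8)
        = ((-mu^16 + (-2)*lam^2*mu^14 + (-4)*lam^4*mu^12 + (-4)*lam^6*mu^10 + (-5)*lam^8*mu^8 + (-4)*lam^10*mu^6 + (-4)*lam^12*mu^4 + (-2)*lam^14*mu^2 + -lam^16) : k)⁻¹ • (((-mu^16 + (-2)*lam^2*mu^14 + (-4)*lam^4*mu^12 + (-4)*lam^6*mu^10 + (-5)*lam^8*mu^8 + (-4)*lam^10*mu^6 + (-4)*lam^12*mu^4 + (-2)*lam^14*mu^2 + -lam^16) : k) • single (a 0) (1:k)) by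
      rw [smul_smul, inv_mul_cancel₀ hD, one_smul], key0 lam mu]
    refine Submodule.smul_mem _ _ ?_
    refine add_mem (add_mem (add_mem (add_mem (add_mem (add_mem (add_mem ?_ ?_) ?_) ?_) ?_) ?_) ?_) ?_ <;>
      first
      | exact Submodule.smul_mem _ _ (Submodule.subset_span ⟨0, rfl⟩)
      | exact Submodule.smul_mem _ _ (Submodule.subset_span ⟨1, rfl⟩)
      | exact Submodule.smul_mem _ _ (Submodule.subset_span ⟨2, rfl⟩)
      | exact Submodule.smul_mem _ _ (Submodule.subset_span ⟨3, rfl⟩)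
      | exact Submodule.smul_mem _ _ (Submodule.subset_span ⟨4, rfl⟩)
      | exact Submodule.smul_mem _ _ (Submodule.subset_span ⟨5, rfl⟩)
      | exact Submodule.smul_mem _ _ (Submodule.subset_span ⟨6, rfl⟩)
      | exact Submodule.smul_mem _ _ (Submodule.subset_span ⟨7, rfl⟩)
  · show (single (a 1) (1:k) : MonoidAlgebra k Q8) ∈ Submodule.span k (Set.range (famV lam mu))
    rw [show (single (a 1) (1:k) : MonoidAlgebra k Q8)
        = ((-mu^16 + (-2)*lam^2*mu^14 + (-4)*lam^4*mu^12 + (-4)*lam^6*mu^10 + (-5)*lam^8*mu^8 + (-4)*lam^10*mu^6 + (-4)*lam^12*mu^4 + (-2)*lam^14*mu^2 + -lam^16) : k)⁻¹ • (((-mu^16 + (-2)*lam^2*mu^14 + (-4)*lam^4*mu^12 + (-4)*lam^6*mu^10 + (-5)*lam^8*mu^8 + (-4)*lam^10*mu^6 + (-4)*lam^12*mu^4 + (-2)*lam^14*mu^2 + -lam^16) : k) • single (a 1) (1:k)) by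
      rw [smul_smul, inv_mul_cancel₀ hD, one_smul], key1 lam mu]
    refine Submodule.smul_mem _ _ ?_
    refine add_mem (add_mem (add_mem (add_mem (add_mem (add_mem (add_mem ?_ ?_) ?_) ?_) ?_) ?_) ?_) ?_ <;>
      first
      | exact Submodule.smul_mem _ _ (Submodule.subset_span ⟨0, rfl⟩)
      | exact Submodule.smul_mem _ _ (Submodule.subset_span ⟨1, rfl⟩)
      | exact Submodule.smul_mem _ _ (Submodule.subset_span ⟨2, rfl⟩)
      | exact Submodule.smul_mem _ _ (Submodule.subset_span ⟨3, rfl⟩)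
      | exact Submodule.smul_mem _ _ (Submodule.subset_span ⟨4, rfl⟩)
      | exact Submodule.smul_mem _ _ (Submodule.subset_span ⟨5, rfl⟩)
      | exact Submodule.smul_mem _ _ (Submodule.subset_span ⟨6, rfl⟩)
      | exact Submodule.smul_mem _ _ (Submodule.subset_span ⟨7, rfl⟩)
  · show (single (a 2) (1:k) : MonoidAlgebra k Q8) ∈ Submodule.span k (Set.range (famV lam mu))
    rw [show (single (a 2) (1:k) : MonoidAlgebra k Q8)
        = ((-mu^16 + (-2)*lam^2*mu^14 + (-4)*lam^4*mu^12 + (-4)*lam^6*mu^10 + (-5)*lam^8*mu^8 + (-4)*lam^10*mu^6 + (-4)*lam^12*mu^4 + (-2)*lam^14*mu^2 + -lam^16) : k)⁻¹ • (((-mu^16 + (-2)*lam^2*mu^14 + (-4)*lam^4*mu^12 + (-4)*lam^6*mu^10 + (-5)*lam^8*mu^8 + (-4)*lam^10*mu^6 + (-4)*lam^12*mu^4 + (-2)*lam^14*mu^2 + -lam^16) : k) • single (a 2) (1:k)) by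
      rw [smul_smul, inv_mul_cancel₀ hD, one_smul], key2 lam mu]
    refine Submodule.smul_mem _ _ ?_
    refine add_mem (add_mem (add_mem (add_mem (add_mem (add_mem (add_mem ?_ ?_) ?_) ?_) ?_) ?_) ?_) ?_ <;>
      first
      | exact Submodule.smul_mem _ _ (Submodule.subset_span ⟨0, rfl⟩)
      | exact Submodule.smul_mem _ _ (Submodule.subset_span ⟨1, rfl⟩)
      | exact Submodule.smul_mem _ _ (Submodule.subset_span ⟨2, rfl⟩)
      | exact Submodule.smul_mem _ _ (Submodule.subset_span ⟨3, rfl⟩)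
      | exact Submodule.smul_mem _ _ (Submodule.subset_span ⟨4, rfl⟩)
      | exact Submodule.smul_mem _ _ (Submodule.subset_span ⟨5, rfl⟩)
      | exact Submodule.smul_mem _ _ (Submodule.subset_span ⟨6, rfl⟩)
      | exact Submodule.smul_mem _ _ (Submodule.subset_span ⟨7, rfl⟩)
  · show (single (a 3) (1:k) : MonoidAlgebra k Q8) ∈ Submodule.span k (Set.range (famV lam mu))
    rw [show (single (a 3) (1:k) : MonoidAlgebra k Q8)
        = ((-mu^16 + (-2)*lam^2*mu^14 + (-4)*lam^4*mu^12 + (-4)*lam^6*mu^10 + (-5)*lam^8*mu^8 + (-4)*lam^10*mu^6 + (-4)*lam^12*mu^4 + (-2)*lam^14*mu^2 + -lam^16) : k)⁻¹ • (((-mu^16 + (-2)*lam^2*mu^14 + (-4)*lam^4*mu^12 + (-4)*lam^6*mu^10 + (-5)*lam^8*mu^8 + (-4)*lam^10*mu^6 + (-4)*lam^12*mu^4 + (-2)*lam^14*mu^2 + -lam^16) : k) • single (a 3) (1:k)) by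
      rw [smul_smul, inv_mul_cancel₀ hD, one_smul], key3 lam mu]
    refine Submodule.smul_mem _ _ ?_
    refine add_mem (add_mem (add_mem (add_mem (add_mem (add_mem (add_mem ?_ ?_) ?_) ?_) ?_) ?_) ?_) ?_ <;>
      first
      | exact Submodule.smul_mem _ _ (Submodule.subset_span ⟨0, rfl⟩)
      | exact Submodule.smul_mem _ _ (Submodule.subset_span ⟨1, rfl⟩)
      | exact Submodule.smul_mem _ _ (Submodule.subset_span ⟨2, rfl⟩)
      | exact Submodule.smul_mem _ _ (Submodule.subset_span ⟨3, rfl⟩)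
      | exact Submodule.smul_mem _ _ (Submodule.subset_span ⟨4, rfl⟩)
      | exact Submodule.smul_mem _ _ (Submodule.subset_span ⟨5, rfl⟩)
      | exact Submodule.smul_mem _ _ (Submodule.subset_span ⟨6, rfl⟩)
      | exact Submodule.smul_mem _ _ (Submodule.subset_span ⟨7, rfl⟩)
  · show (single (xa 0) (1:k) : MonoidAlgebra k Q8) ∈ Submodule.span k (Set.range (famV lam mu))
    rw [show (single (xa 0) (1:k) : MonoidAlgebra k Q8)
        = ((-mu^16 + (-2)*lam^2*mu^14 + (-4)*lam^4*mu^12 + (-4)*lam^6*mu^10 + (-5)*lam^8*mu^8 + (-4)*lam^10*mu^6 + (-4)*lam^12*mu^4 + (-2)*lam^14*mu^2 + -lam^16) : k)⁻¹ • (((-mu^16 + (-2)*lam^2*mu^14 + (-4)*lam^4*mu^12 + (-4)*lam^6*mu^10 + (-5)*lam^8*mu^8 + (-4)*lam^10*mu^6 + (-4)*lam^12*mu^4 + (-2)*lam^14*mu^2 + -lam^16) : k) • single (xa 0) (1:k)) by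
      rw [smul_smul, inv_mul_cancel₀ hD, one_smul], key4 lam mu]
    refine Submodule.smul_mem _ _ ?_
    refine add_mem (add_mem (add_mem (add_mem (add_mem (add_mem (add_mem ?_ ?_) ?_) ?_) ?_) ?_) ?_) ?_ <;>
      first
      | exact Submodule.smul_mem _ _ (Submodule.subset_span ⟨0, rfl⟩)
      | exact Submodule.smul_mem _ _ (Submodule.subset_span ⟨1, rfl⟩)
      | exact Submodule.smul_mem _ _ (Submodule.subset_span ⟨2, rfl⟩)
      | exact Submodule.smul_mem _ _ (Submodule.subset_span ⟨3, rfl⟩)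
      | exact Submodule.smul_mem _ _ (Submodule.subset_span ⟨4, rfl⟩)
      | exact Submodule.smul_mem _ _ (Submodule.subset_span ⟨5, rfl⟩)
      | exact Submodule.smul_mem _ _ (Submodule.subset_span ⟨6, rfl⟩)
      | exact Submodule.smul_mem _ _ (Submodule.subset_span ⟨7, rfl⟩)
  · show (single (xa 1) (1:k) : MonoidAlgebra k Q8) ∈ Submodule.span k (Set.range (famV lam mu))
    rw [show (single (xa 1) (1:k) : MonoidAlgebra k Q8)
        = ((-mu^16 + (-2)*lam^2*mu^14 + (-4)*lam^4*mu^12 + (-4)*lam^6*mu^10 + (-5)*lam^8*mu^8 + (-4)*lam^10*mu^6 + (-4)*lam^12*mu^4 + (-2)*lam^14*mu^2 + -lam^16) : k)⁻¹ • (((-mu^16 + (-2)*lam^2*mu^14 + (-4)*lam^4*mu^12 + (-4)*lam^6*mu^10 + (-5)*lam^8*mu^8 + (-4)*lam^10*mu^6 + (-4)*lam^12*mu^4 + (-2)*lam^14*mu^2 + -lam^16) : k) • single (xa 1) (1:k)) by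
      rw [smul_smul, inv_mul_cancel₀ hD, one_smul], key7 lam mu]
    refine Submodule.smul_mem _ _ ?_
    refine add_mem (add_mem (add_mem (add_mem (add_mem (add_mem (add_mem ?_ ?_) ?_) ?_) ?_) ?_) ?_) ?_ <;>
      first
      | exact Submodule.smul_mem _ _ (Submodule.subset_span ⟨0, rfl⟩)
      | exact Submodule.smul_mem _ _ (Submodule.subset_span ⟨1, rfl⟩)
      | exact Submodule.smul_mem _ _ (Submodule.subset_span ⟨2, rfl⟩)
      | exact Submodule.smul_mem _ _ (Submodule.subset_span ⟨3, rfl⟩)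
      | exact Submodule.smul_mem _ _ (Submodule.subset_span ⟨4, rfl⟩)
      | exact Submodule.smul_mem _ _ (Submodule.subset_span ⟨5, rfl⟩)
      | exact Submodule.smul_mem _ _ (Submodule.subset_span ⟨6, rfl⟩)
      | exact Submodule.smul_mem _ _ (Submodule.subset_span ⟨7, rfl⟩)
  · show (single (xa 2) (1:k) : MonoidAlgebra k Q8) ∈ Submodule.span k (Set.range (famV lam mu))
    rw [show (single (xa 2) (1:k) : MonoidAlgebra k Q8)
        = ((-mu^16 + (-2)*lam^2*mu^14 + (-4)*lam^4*mu^12 + (-4)*lam^6*mu^10 + (-5)*lam^8*mu^8 + (-4)*lam^10*mu^6 + (-4)*lam^12*mu^4 + (-2)*lam^14*mu^2 + -lam^16) : k)⁻¹ • (((-mu^16 + (-2)*lam^2*mu^14 + (-4)*lam^4*mu^12 + (-4)*lam^6*mu^10 + (-5)*lam^8*mu^8 + (-4)*lam^10*mu^6 + (-4)*lam^12*mu^4 + (-2)*lam^14*mu^2 + -lam^16) : k) • single (xa 2) (1:k)) by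
      rw [smul_smul, inv_mul_cancel₀ hD, one_smul], key6 lam mu]
    refine Submodule.smul_mem _ _ ?_
    refine add_mem (add_mem (add_mem (add_mem (add_mem (add_mem (add_mem ?_ ?_) ?_) ?_) ?_) ?_) ?_) ?_ <;>
      first
      | exact Submodule.smul_mem _ _ (Submodule.subset_span ⟨0, rfl⟩)
      | exact Submodule.smul_mem _ _ (Submodule.subset_span ⟨1, rfl⟩)
      | exact Submodule.smul_mem _ _ (Submodule.subset_span ⟨2, rfl⟩)
      | exact Submodule.smul_mem _ _ (Submodule.subset_span ⟨3, rfl⟩)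
      | exact Submodule.smul_mem _ _ (Submodule.subset_span ⟨4, rfl⟩)
      | exact Submodule.smul_mem _ _ (Submodule.subset_span ⟨5, rfl⟩)
      | exact Submodule.smul_mem _ _ (Submodule.subset_span ⟨6, rfl⟩)
      | exact Submodule.smul_mem _ _ (Submodule.subset_span ⟨7, rfl⟩)
  · show (single (xa 3) (1:k) : MonoidAlgebra k Q8) ∈ Submodule.span k (Set.range (famV lam mu))
    rw [show (single (xa 3) (1:k) : MonoidAlgebra k Q8)
        = ((-mu^16 + (-2)*lam^2*mu^14 + (-4)*lam^4*mu^12 + (-4)*lam^6*mu^10 + (-5)*lam^8*mu^8 + (-4)*lam^10*mu^6 + (-4)*lam^12*mu^4 + (-2)*lam^14*mu^2 + -lam^16) : k)⁻¹ • (((-mu^16 + (-2)*lam^2*mu^14 + (-4)*lam^4*mu^12 + (-4)*lam^6*mu^10 + (-5)*lam^8*mu^8 + (-4)*lam^10*mu^6 + (-4)*lam^12*mu^4 + (-2)*lam^14*mu^2 + -lam^16) : k) • single (xa 3) (1:k)) by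
      rw [smul_smul, inv_mul_cancel₀ hD, one_smul], key5 lam mu]
    refine Submodule.smul_mem _ _ ?_
    refine add_mem (add_mem (add_mem (add_mem (add_mem (add_mem (add_mem ?_ ?_) ?_) ?_) ?_) ?_) ?_) ?_ <;>
      first
      | exact Submodule.smul_mem _ _ (Submodule.subset_span ⟨0, rfl⟩)
      | exact Submodule.smul_mem _ _ (Submodule.subset_span ⟨1, rfl⟩)
      | exact Submodule.smul_mem _ _ (Submodule.subset_span ⟨2, rfl⟩)
      | exact Submodule.smul_mem _ _ (Submodule.subset_span ⟨3, rfl⟩)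
      | exact Submodule.smul_mem _ _ (Submodule.subset_span ⟨4, rfl⟩)
      | exact Submodule.smul_mem _ _ (Submodule.subset_span ⟨5, rfl⟩)
      | exact Submodule.smul_mem _ _ (Submodule.subset_span ⟨6, rfl⟩)
      | exact Submodule.smul_mem _ _ (Submodule.subset_span ⟨7, rfl⟩)
lemma sq_one_add (h2 : (2:k) = 0) (y : MonoidAlgebra k Q8) : (1 + y) ^ 2 = 1 + y ^ 2 := by
  have hy : y + y = 0 := by rw [← two_smul k, h2, zero_smul]
  have hh : (1 + y) ^ 2 = 1 + (y + y) + y ^ 2 := by noncomm_ring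
  rw [hh, hy, add_zero]

lemma u4 (h2 : (2:k) = 0) : (1 + Xel lam mu) ^ 4 = 1 := by
  have h44 : (4 : ℕ) = 2 * 2 := rfl
  rw [h44, pow_mul, sq_one_add h2, sq_one_add h2, ← pow_mul, ← h44, hX4 lam mu h2, add_zero]

lemma unit_u (h2 : (2:k) = 0) : IsUnit (1 + Xel lam mu) :=
  ⟨⟨1 + Xel lam mu, (1 + Xel lam mu) ^ 3,
    by rw [← pow_succ']; exact u4 lam mu h2,
    by rw [← pow_succ]; exact u4 lam mu h2⟩, rfl⟩

lemma u2ne (h2 : (2:k) = 0) (hd : lam ^ 2 + lam * mu + mu ^ 2 ≠ 0) :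
    (1 + Xel lam mu) ^ 2 ≠ 1 := by
  rw [sq_one_add h2]
  intro hEq
  have hX20 : Xel lam mu ^ 2 = 0 := by
    exact add_eq_left.mp hEq
  rw [hX2 lam mu] at hX20
  have e1 : (single (a 0) (mu^2 + (2)*lam*mu + lam^2) + single (a 1) ((-2)*lam*mu + (-2)*lam^2) + single (a 2) (mu^2 + lam^2) + single (xa 0) ((-2)*mu^2 + (-2)*lam*mu) + single (xa 3) (lam*mu) + single (xa 1) (lam*mu) : MonoidAlgebra k Q8).coeff (a 0) = (0 : MonoidAlgebra k Q8).coeff (a 0) := by rw [hX20]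
  have e2 : (single (a 0) (mu^2 + (2)*lam*mu + lam^2) + single (a 1) ((-2)*lam*mu + (-2)*lam^2) + single (a 2) (mu^2 + lam^2) + single (xa 0) ((-2)*mu^2 + (-2)*lam*mu) + single (xa 3) (lam*mu) + single (xa 1) (lam*mu) : MonoidAlgebra k Q8).coeff (xa 3) = (0 : MonoidAlgebra k Q8).coeff (xa 3) := by rw [hX20]
  simp only [ma_add_apply, ma_zero_apply, MonoidAlgebra.single_apply] at e1 e2
  simp +decide only [if_true, if_false, add_zero, zero_add] at e1 e2
  exact hd (by linear_combination e1 - e2)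

lemma mem_span_all (h2 : (2:k) = 0) (hd : lam ^ 2 + lam * mu + mu ^ 2 ≠ 0)
    (m : MonoidAlgebra k Q8) : m ∈ Submodule.span k (Set.range (famV lam mu)) := by
  have hrep : m = ∑ g : Q8, single g (m.coeff g) := by
    conv_lhs => rw [← MonoidAlgebra.sum_single m]
    rw [Finsupp.sum_fintype]
    intro g
    exact single_zero g
  rw [hrep]
  refine Submodule.sum_mem _ fun g _ => ?_
  rw [show (single g (m.coeff g) : MonoidAlgebra k Q8) = (m.coeff g) • single g (1:k) by
    rw [MonoidAlgebra.smul_single, smul_eq_mul, mul_one]]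
  exact Submodule.smul_mem _ _ (single_mem_span lam mu h2 hd g)

lemma lin_ind (h2 : (2:k) = 0) (hd : lam ^ 2 + lam * mu + mu ^ 2 ≠ 0) :
    LinearIndependent k (famV lam mu) := by
  have hspan : ⊤ ≤ Submodule.span k (Set.range (famV lam mu)) :=
    fun m _ => mem_span_all lam mu h2 hd m
  have hcard : Fintype.card (Fin 8) = Module.finrank k (MonoidAlgebra k Q8) := by
    have hb : Module.finrank k (MonoidAlgebra k Q8) = Fintype.card Q8 :=
      Module.finrank_eq_card_basis (MonoidAlgebra.basis Q8 k)
    rw [hb]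
    decide
  have := (basisOfTopLeSpanOfCardEqFinrank (famV lam mu) hspan hcard).linearIndependent
  rwa [coe_basisOfTopLeSpanOfCardEqFinrank] at this

lemma adjoin_struct {y : MonoidAlgebra k Q8} (hy : y ^ 4 = 0) {r : MonoidAlgebra k Q8}
    (hr : r ∈ Algebra.adjoin k {y}) :
    ∃ c0 c1 c2 c3 : k, r = c0 • 1 + c1 • y + c2 • y ^ 2 + c3 • y ^ 3 := by
  rw [Algebra.adjoin_singleton_eq_range_aeval] at hr
  obtain ⟨p, hp⟩ := hr
  have hmon : (Polynomial.X ^ 4 : Polynomial k).Monic := Polynomial.monic_X_pow _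
  have h1 : Polynomial.aeval y p = Polynomial.aeval y (p %ₘ Polynomial.X ^ 4) := by
    conv_lhs => rw [← Polynomial.modByMonic_add_div p (Polynomial.X ^ 4)]
    rw [map_add, map_mul, map_pow, Polynomial.aeval_X, hy, zero_mul, add_zero]
  have hdeg : (p %ₘ Polynomial.X ^ 4).natDegree < 4 := by
    by_cases hq0 : p %ₘ Polynomial.X ^ 4 = 0
    · rw [hq0]; simp
    · have h3 := Polynomial.degree_modByMonic_lt p hmon
      rw [Polynomial.degree_X_pow] at h3
      exact (Polynomial.natDegree_lt_iff_degree_lt hq0).mpr h3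
  have h4 := Polynomial.aeval_eq_sum_range' hdeg y
  refine ⟨(p %ₘ Polynomial.X ^ 4).coeff 0, (p %ₘ Polynomial.X ^ 4).coeff 1,
    (p %ₘ Polynomial.X ^ 4).coeff 2, (p %ₘ Polynomial.X ^ 4).coeff 3, ?_⟩
  have hp' : Polynomial.aeval y p = r := hp
  rw [← hp', h1, h4]
  simp [Finset.sum_range_succ, pow_zero, pow_one]
lemma projective (h2 : (2:k) = 0) (hd : lam ^ 2 + lam * mu + mu ^ 2 ≠ 0) :
    Module.Projective (kGen k (Xel lam mu)) (MonoidAlgebra k Q8) := by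
  set R := kGen k (Xel lam mu) with hR
  have smul_def : ∀ (r : R) (m : MonoidAlgebra k Q8), r • m = (r : MonoidAlgebra k Q8) * m :=
    fun _ _ => rfl
  have hXmem : Xel lam mu ∈ R := Algebra.self_mem_adjoin_singleton k _
  let φ : (R × R) →ₗ[R] MonoidAlgebra k Q8 :=
    { toFun := fun p => (p.1 : MonoidAlgebra k Q8) + (p.2 : MonoidAlgebra k Q8) * G2el lam mu
      map_add' := by
        intro p q
        simp only [Prod.fst_add, Prod.snd_add, Subalgebra.coe_add, add_mul]
        abel
      map_smul' := by
        intro r p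
        simp only [Prod.smul_fst, Prod.smul_snd, smul_eq_mul, RingHom.id_apply,
          MulMemClass.coe_mul, smul_def]
        rw [mul_add, mul_assoc]}
  have hφ : ∀ p : R × R, φ p = (p.1 : MonoidAlgebra k Q8) + (p.2 : MonoidAlgebra k Q8) * G2el lam mu :=
    fun _ => rfl
  have hinj : Function.Injective φ := by
    refine LinearMap.ker_eq_bot.mp (LinearMap.ker_eq_bot'.mpr fun p hp => ?_)
    obtain ⟨c0, c1, c2, c3, hc⟩ := adjoin_struct (hX4 lam mu h2) p.1.2
    obtain ⟨d0, d1, d2, d3, hd'⟩ := adjoin_struct (hX4 lam mu h2) p.2.2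
    have key : (p.1 : MonoidAlgebra k Q8) + (p.2 : MonoidAlgebra k Q8) * G2el lam mu
        = c0 • (1 : MonoidAlgebra k Q8) + c1 • Xel lam mu + c2 • Xel lam mu ^ 2
          + c3 • Xel lam mu ^ 3 + d0 • G2el lam mu + d1 • (Xel lam mu * G2el lam mu)
          + d2 • (Xel lam mu ^ 2 * G2el lam mu) + d3 • (Xel lam mu ^ 3 * G2el lam mu) := by
      rw [hc, hd']
      simp only [add_mul, smul_mul_assoc, one_mul]
      abel
    have hsum : ∑ j : Fin 8, (![c0, c1, c2, c3, d0, d1, d2, d3]) j • famV lam mu j = 0 := by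
      rw [Fin.sum_univ_eight]
      show c0 • (1 : MonoidAlgebra k Q8) + c1 • Xel lam mu + c2 • Xel lam mu ^ 2
          + c3 • Xel lam mu ^ 3 + d0 • G2el lam mu + d1 • (Xel lam mu * G2el lam mu)
          + d2 • (Xel lam mu ^ 2 * G2el lam mu) + d3 • (Xel lam mu ^ 3 * G2el lam mu) = 0
      rw [← key]
      exact hp
    have hz := Fintype.linearIndependent_iff.mp (lin_ind lam mu h2 hd) _ hsum
    have hc0 : c0 = 0 := hz 0
    have hc1 : c1 = 0 := hz 1
    have hc2 : c2 = 0 := hz 2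
    have hc3 : c3 = 0 := hz 3
    have hd0 : d0 = 0 := hz 4
    have hd1 : d1 = 0 := hz 5
    have hd2 : d2 = 0 := hz 6
    have hd3 : d3 = 0 := hz 7
    have hp1 : (p.1 : MonoidAlgebra k Q8) = 0 := by
      rw [hc, hc0, hc1, hc2, hc3]; simp
    have hp2 : (p.2 : MonoidAlgebra k Q8) = 0 := by
      rw [hd', hd0, hd1, hd2, hd3]; simp
    exact Prod.ext_iff.mpr ⟨Subtype.ext hp1, Subtype.ext hp2⟩
  have hsurj : Function.Surjective φ := by
    intro m
    let N : Submodule k (MonoidAlgebra k Q8) :=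
      { carrier := Set.range φ
        add_mem' := by rintro a b ⟨p, rfl⟩ ⟨q, rfl⟩; exact ⟨p + q, map_add φ p q⟩
        zero_mem' := ⟨0, map_zero φ⟩
        smul_mem' := by
          rintro c a ⟨p, rfl⟩
          refine ⟨(⟨algebraMap k (MonoidAlgebra k Q8) c, Subalgebra.algebraMap_mem _ c⟩ : R) • p, ?_⟩
          rw [map_smul, smul_def, ← Algebra.smul_def] }
    have hN0 : (1 : MonoidAlgebra k Q8) ∈ N := ⟨(1, 0), by simp [hφ]⟩
    have hN1 : Xel lam mu ∈ N := ⟨(⟨Xel lam mu, hXmem⟩, 0), by simp [hφ]⟩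
    have hN2 : Xel lam mu ^ 2 ∈ N := ⟨(⟨Xel lam mu ^ 2, pow_mem hXmem 2⟩, 0), by simp [hφ]⟩
    have hN3 : Xel lam mu ^ 3 ∈ N := ⟨(⟨Xel lam mu ^ 3, pow_mem hXmem 3⟩, 0), by simp [hφ]⟩
    have hN4 : G2el lam mu ∈ N := ⟨(0, 1), by simp [hφ]⟩
    have hN5 : Xel lam mu * G2el lam mu ∈ N := ⟨(0, ⟨Xel lam mu, hXmem⟩), by simp [hφ]⟩
    have hN6 : Xel lam mu ^ 2 * G2el lam mu ∈ N := ⟨(0, ⟨Xel lam mu ^ 2, pow_mem hXmem 2⟩), by simp [hφ]⟩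
    have hN7 : Xel lam mu ^ 3 * G2el lam mu ∈ N := ⟨(0, ⟨Xel lam mu ^ 3, pow_mem hXmem 3⟩), by simp [hφ]⟩
    have h5 : Submodule.span k (Set.range (famV lam mu)) ≤ N := by
      rw [Submodule.span_le]
      rintro _ ⟨j, rfl⟩
      fin_cases j
      · exact hN0
      · exact hN1
      · exact hN2
      · exact hN3
      · exact hN4
      · exact hN5
      · exact hN6
      · exact hN7
    exact h5 (mem_span_all lam mu h2 hd m)
  exact Module.Projective.of_equiv (LinearEquiv.ofBijective φ ⟨hinj, hsurj⟩)

end Q8Aux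

/-- For `λ² + λμ + μ² ≠ 0`, the element `1 + x` with
`x = λ(s-1) + μ(t-1)` is a unit of order `4` in `kQ₈`, and `kQ₈` is projective
as a module over the subalgebra generated by `x`. -/
theorem stmt15 (k : Type) [Field k] [CharP k 2]
    (lam mu : k) (h : lam ^ 2 + lam * mu + mu ^ 2 ≠ 0)
    (x : MonoidAlgebra k Q8)
    (hx : x = lam • (MonoidAlgebra.of k Q8 sQ8 - 1) +
        mu • (MonoidAlgebra.of k Q8 tQ8 - 1)) :
    IsUnit (1 + x) ∧ (1 + x) ^ 4 = 1 ∧ (1 + x) ^ 2 ≠ 1 ∧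
      Module.Projective (kGen k x) (MonoidAlgebra k Q8) := by
  have h2 : (2 : k) = 0 := by
    have := CharP.cast_eq_zero k 2
    exact_mod_cast this
  subst hx
  rw [Q8Aux.hXel lam mu]
  exact ⟨Q8Aux.unit_u lam mu h2, Q8Aux.u4 lam mu h2, Q8Aux.u2ne lam mu h2 h,
    Q8Aux.projective lam mu h2 h⟩
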